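/- Let A = {(i, j) ∈ ℤ² : 0 ≤ j ≤ max(i−1, 0)} and define φ: A → A by φ(i, j) = (i, j−1) if j > 0, and φ(i, 0) = (min(i−1, 0), 0). Then the stable subset Stab(φ, A) is empty, while the attractive subset Attrac(φ, A) equals {(i, 0) : i ≤ 0}. -/

import Mathlib

/-- The set of stable points: points admitting an infinite chain of preimages. -/
def stableSet {A : Type*} (φ : A → A) : Set A :=
  {a | ∃ s : ℕ → A, s 0 = a ∧ ∀ i : ℕ, φ (s (i + 1)) = s i}

/-- The set of attractive points: points in the image of every iterate. -/
def attracSet {A : Type*} (φ : A → A) : Set A := {a | ∀ i : ℕ, ∃ b, φ^[i] b = a}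

/-- Godelle's example: the set `A = {(i, j) ∈ ℤ² : 0 ≤ j ≤ max (i − 1) 0}`. -/
def GodelleSet : Type := {p : ℤ × ℤ // 0 ≤ p.2 ∧ p.2 ≤ max (p.1 - 1) 0}

/-- Godelle's self-map: `φ(i, j) = (i, j − 1)` for `j > 0` and `φ(i, 0) = (min (i − 1) 0, 0)`. -/
def godelleMap (a : GodelleSet) : GodelleSet :=
  if h : 0 < a.val.2 then
    ⟨(a.val.1, a.val.2 - 1), by have := a.property; constructor <;> omega⟩
  else
    ⟨(min (a.val.1 - 1) 0, 0), by constructor <;> omega⟩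

lemma gmem (a : GodelleSet) : 0 ≤ a.val.2 ∧ a.val.2 ≤ max (a.val.1 - 1) 0 := a.property

lemma gm_pos (b : GodelleSet) (h : 0 < b.val.2) :
    (godelleMap b).val = (b.val.1, b.val.2 - 1) := by
  erw [godelleMap, dif_pos h]

lemma gm_zero (b : GodelleSet) (h : ¬ 0 < b.val.2) :
    (godelleMap b).val = (min (b.val.1 - 1) 0, 0) := by
  erw [godelleMap, dif_neg h]

lemma pre_pos {a b : GodelleSet} (h : godelleMap b = a) (ha : 1 ≤ a.val.1) :
    b.val.1 = a.val.1 ∧ b.val.2 = a.val.2 + 1 := by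
  by_cases hb : 0 < b.val.2
  · have := gm_pos b hb
    rw [h] at this
    rw [Prod.ext_iff] at this
    simp only at this
    omega
  · have := gm_zero b hb
    rw [h] at this
    rw [Prod.ext_iff] at this
    simp only at this
    omega

lemma pre_neg {a b : GodelleSet} (h : godelleMap b = a) (ha : a.val.1 ≤ 0) :
    a.val.1 + 1 ≤ b.val.1 := by
  by_cases hb : 0 < b.val.2
  · have := gm_pos b hb
    rw [h] at this
    rw [Prod.ext_iff] at this
    simp only at this
    have := gmem b
    omega
  · have := gm_zero b hb
    rw [h] at this
    rw [Prod.ext_iff] at this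
    simp only at this
    omega

lemma gm_step_neg (i : ℤ) (hi : i ≤ 1) (h : 0 ≤ ((i, (0:ℤ)) : ℤ × ℤ).2 ∧
    ((i, (0:ℤ)) : ℤ × ℤ).2 ≤ max (((i, (0:ℤ)) : ℤ × ℤ).1 - 1) 0) :
    godelleMap ⟨(i, 0), h⟩ = ⟨(i - 1, 0), by constructor <;> omega⟩ := by
  apply Subtype.ext
  erw [gm_zero _ (by simp)]
  simp only [Prod.mk.injEq]
  refine ⟨?_, by trivial⟩
  show min (i - 1) 0 = i - 1
  omega

lemma iter_neg (n : ℕ) : ∀ (i : ℤ), i ≤ 0 → ∀ h,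
    godelleMap^[n] (⟨(i, 0), h⟩ : GodelleSet) =
      ⟨(i - n, 0), by constructor <;> omega⟩ := by
  induction n with
  | zero =>
    intro i hi h
    apply Subtype.ext
    simp
    rfl
  | succ n ih =>
    intro i hi h
    erw [Function.iterate_succ_apply, gm_step_neg i (by omega) h,
      ih (i - 1) (by omega)]
    apply Subtype.ext
    show (i - 1 - (n:ℤ), (0:ℤ)) = (i - ((n+1 : ℕ) : ℤ), (0:ℤ))
    simp only [Prod.mk.injEq, and_true, true_and]
    push_cast
    omega

lemma iter_col (j : ℕ) : ∀ (i : ℤ) (h : 0 ≤ ((i, (j:ℤ)) : ℤ × ℤ).2 ∧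
    ((i, (j:ℤ)) : ℤ × ℤ).2 ≤ max (((i, (j:ℤ)) : ℤ × ℤ).1 - 1) 0),
    godelleMap^[j] (⟨(i, (j:ℤ)), h⟩ : GodelleSet) =
      ⟨(i, 0), by constructor <;> omega⟩ := by
  induction j with
  | zero =>
    intro i h
    apply Subtype.ext
    simp
    rfl
  | succ j ih =>
    intro i h
    simp only at h
    have e : godelleMap (⟨(i, ((j:ℕ)+1 : ℕ)), h⟩ : GodelleSet) =
        ⟨(i, (j:ℤ)), by simp only; push_cast at h ⊢; omega⟩ := by
      apply Subtype.ext
      erw [gm_pos _ (by simp only; push_cast; omega)]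
      show ((i, (((j:ℕ)+1 : ℕ) : ℤ) - 1) : ℤ × ℤ) = ((i, (j:ℤ)) : ℤ × ℤ)
      simp only [Prod.mk.injEq, and_true, true_and]
      push_cast
      omega
    erw [Function.iterate_succ_apply, e, ih i]

lemma iter_pos : ∀ (n : ℕ) (a b : GodelleSet), godelleMap^[n] b = a → 1 ≤ a.val.1 →
    b.val.1 = a.val.1 ∧ b.val.2 = a.val.2 + n := by
  intro n
  induction n with
  | zero => intro a b h ha; rw [Function.iterate_zero_apply] at h; subst h; simp
  | succ n ih =>
    intro a b h ha
    rw [Function.iterate_succ_apply'] at h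
    obtain ⟨h1, h2⟩ := pre_pos h ha
    obtain ⟨h3, h4⟩ := ih (godelleMap^[n] b) b rfl (by omega)
    push_cast
    omega

theorem stmt3 :
    stableSet godelleMap = ∅ ∧
      attracSet godelleMap = {a : GodelleSet | a.val.1 ≤ 0 ∧ a.val.2 = 0} := by
  constructor
  · ext a
    simp only [stableSet, Set.mem_setOf_eq, Set.mem_empty_iff_false, iff_false]
    rintro ⟨s, hs0, hs⟩
    -- first, find m with 1 ≤ (s m).val.1
    have key : ∀ n : ℕ, (s 0).val.1 + n ≤ (s n).val.1 ∨ ∃ m : ℕ, 1 ≤ (s m).val.1 := by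
      intro n
      induction n with
      | zero => left; simp
      | succ n ih =>
        rcases ih with h | h
        · by_cases hn : 1 ≤ (s n).val.1
          · right; exact ⟨n, hn⟩
          · left
            have := pre_neg (hs n) (by omega)
            push_cast
            omega
        · right; exact h
    have hm : ∃ m : ℕ, 1 ≤ (s m).val.1 := by
      rcases key (1 - (s 0).val.1).toNat with h | h
      · exact ⟨(1 - (s 0).val.1).toNat, by omega⟩
      · exact h
    obtain ⟨m, hm⟩ := hm
    -- the second coordinate grows without bound along the chain, contradiction
    have grow : ∀ k : ℕ, (s (m + k)).val.1 = (s m).val.1 ∧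
        (s (m + k)).val.2 = (s m).val.2 + k := by
      intro k
      induction k with
      | zero => simp
      | succ k ih =>
        have h := pre_pos (a := s (m + k)) (b := s (m + k + 1)) (hs (m + k)) (by omega)
        have e : m + (k + 1) = m + k + 1 := rfl
        rw [e]
        push_cast
        omega
    have := grow ((s m).val.1).toNat
    have := gmem (s (m + ((s m).val.1).toNat))
    have := gmem (s m)
    omega
  · ext a
    obtain ⟨⟨i, j⟩, hp⟩ := a
    simp only [attracSet, Set.mem_setOf_eq]
    constructor
    · intro h
      have ha : i ≤ 0 := by
        by_contra hc
        obtain ⟨b, hb⟩ := h i.toNat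
        have h1 := iter_pos i.toNat _ _ hb (by simp only; omega)
        have h2 := gmem b
        simp only at h1
        omega
      refine ⟨ha, ?_⟩
      simp only at hp ⊢
      omega
    · rintro ⟨hi, hj⟩ n
      subst hj
      by_cases hn : (n : ℤ) ≤ -i
      · refine ⟨⟨(i + n, 0), by constructor <;> omega⟩, ?_⟩
        rw [iter_neg n (i + n) (by omega)]
        apply Subtype.ext
        show (i + (n:ℤ) - (n:ℤ), (0:ℤ)) = (i, (0:ℤ))
        simp only [Prod.mk.injEq, and_true, true_and]
        omega
      · obtain ⟨j0, hj0⟩ : ∃ j0 : ℕ, (j0 : ℤ) = n + i - 1 := ⟨(n + i - 1).toNat, by omega⟩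
        obtain ⟨k, hk⟩ : ∃ k : ℤ, k = n + i := ⟨_, rfl⟩
        have hk1 : 1 ≤ k := by omega
        have hjk : (j0 : ℤ) = k - 1 := by omega
        have hmem : 0 ≤ ((k, (j0 : ℤ)) : ℤ × ℤ).2 ∧
            ((k, (j0 : ℤ)) : ℤ × ℤ).2 ≤ max (((k, (j0 : ℤ)) : ℤ × ℤ).1 - 1) 0 := by
          clear hj0 hk hn
          simp only
          omega
        refine ⟨⟨(k, (j0 : ℤ)), hmem⟩, ?_⟩
        have hrep : n = (-i).toNat + (1 + j0) := by change i ≤ 0 at hi; omega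
        erw [hrep, Function.iterate_add_apply, Function.iterate_add_apply,
          Function.iterate_one, iter_col j0 k]
        have e2 : godelleMap (⟨(k, 0), by constructor <;> omega⟩ : GodelleSet) =
            ⟨(0, 0), by constructor <;> omega⟩ := by
          apply Subtype.ext
          erw [gm_zero _ (by simp)]
          simp only [Prod.mk.injEq]
          refine ⟨?_, by trivial⟩
          show min (k - 1) 0 = 0
          omega
        erw [Function.iterate_one (f := godelleMap), e2, iter_neg (-i).toNat 0 le_rfl]
        apply Subtype.ext
        show ((0:ℤ) - ((-i).toNat : ℤ), (0:ℤ)) = (i, (0:ℤ))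
        simp only [Prod.mk.injEq, and_true, true_and]
        omega
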